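/- Let T, R, S be triangulated categories with T containing full triangulated subcategories R and S, and set U = S ∩ R. If every morphism from an object of R to an object of S factors through some object of U, then the induced functor J : R/U → T/S between Verdier quotients is fully faithful. -/

import Mathlib

open CategoryTheory CategoryTheory.Limits CategoryTheory.Pretriangulated
  CategoryTheory.Triangulated

namespace Stmt8Aux

variable {C : Type*} [Category C]

/-- The multiplicative closure of a morphism property. -/
inductive MClosure (W : MorphismProperty C) : MorphismProperty C
  | of {X Y : C} (f : X ⟶ Y) (hf : W f) : MClosure W f
  | id (X : C) : MClosure W (𝟙 X)
  | comp {X Y Z : C} (f : X ⟶ Y) (g : Y ⟶ Z) (hf : MClosure W f) (hg : MClosure W g) :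
      MClosure W (f ≫ g)

instance (W : MorphismProperty C) : (MClosure W).ContainsIdentities := ⟨.id⟩

instance (W : MorphismProperty C) : (MClosure W).IsMultiplicative where
  comp_mem f g hf hg := .comp f g hf hg

lemma MClosure.isInvertedBy {D : Type*} [Category D] {W : MorphismProperty C} {F : C ⥤ D}
    (hF : W.IsInvertedBy F) : (MClosure W).IsInvertedBy F := by
  intro X Y f hf
  induction hf with
  | of f hf => exact hF f hf
  | id X => rw [F.map_id]; infer_instance
  | comp f g hf hg ihf ihg =>
      rw [F.map_comp]
      have := ihf
      have := ihg
      infer_instance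

/-- The strict universal property of `W.Q` with respect to `MClosure W`. -/
noncomputable def strictUP (W : MorphismProperty C) (E : Type*) [Category E] :
    Localization.StrictUniversalPropertyFixedTarget W.Q (MClosure W) E where
  inverts := MClosure.isInvertedBy W.Q_inverts
  lift F hF := Localization.Construction.lift F (fun _ _ f hf => hF _ (.of f hf))
  fac F hF := Localization.Construction.fac _ _
  uniq := Localization.Construction.uniq

instance isLocalizationMClosure (W : MorphismProperty C) :
    W.Q.IsLocalization (MClosure W) :=
  Functor.IsLocalization.mk' _ _ (strictUP W _) (strictUP W _)

section

variable [Preadditive C] [HasZeroObject C] [HasShift C ℤ]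
  [∀ (n : ℤ), (shiftFunctor C n).Additive] [Pretriangulated C] (S : ObjectProperty C) [S.IsTriangulated]

lemma ore_left {X' X Y : C} (s : X' ⟶ X) (hs : S.trW s) (f : X' ⟶ Y) :
    ∃ (Y' : C) (f' : X ⟶ Y') (s' : Y ⟶ Y') (_ : S.trW s'), f ≫ s' = s ≫ f' := by
  obtain ⟨Z, g, h, H, mem⟩ := hs
  obtain ⟨Y', s', g', mem'⟩ := distinguished_cocone_triangle₂ (h ≫ f⟦(1 : ℤ)⟧')
  obtain ⟨b, hb₁, _⟩ :=
    complete_distinguished_triangle_morphism₂ _ _ H mem' f (𝟙 Z) (by exact (Category.id_comp _).symm)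
  exact ⟨Y', b, s', ⟨_, _, _, mem', mem⟩, hb₁.symm⟩

lemma ext_left {X' X Y : C} (s : X' ⟶ X) (hs : S.trW s) (f₁ f₂ : X ⟶ Y)
    (hf : s ≫ f₁ = s ≫ f₂) :
    ∃ (Y' : C) (t : Y ⟶ Y') (_ : S.trW t), f₁ ≫ t = f₂ ≫ t := by
  obtain ⟨Z, g, h, H, mem⟩ := hs
  have hf₂ : s ≫ (f₁ - f₂) = 0 := by rw [Preadditive.comp_sub, hf, sub_self]
  obtain ⟨q, hq⟩ := Triangle.yoneda_exact₂ _ H _ hf₂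
  change Z ⟶ Y at q
  obtain ⟨Y', r, t, mem'⟩ := distinguished_cocone_triangle q
  refine ⟨Y', r, ⟨_, _, _, rot_of_distTriang _ mem', S.le_shift 1 _ mem⟩, ?_⟩
  have eq := comp_distTriang_mor_zero₁₂ _ mem'
  change q ≫ r = 0 at eq
  change f₁ - f₂ = g ≫ q at hq
  rw [← sub_eq_zero, ← Preadditive.sub_comp, hq, Category.assoc, eq, Limits.comp_zero]

lemma ore_right {X Y Y' : C} (s : Y ⟶ Y') (hs : S.trW s) (f : X ⟶ Y') :
    ∃ (X' : C) (s' : X' ⟶ X) (f' : X' ⟶ Y) (_ : S.trW s'), s' ≫ f = f' ≫ s := by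
  obtain ⟨Z, g, h, H, mem⟩ := hs
  obtain ⟨X', u, h', mem'⟩ := distinguished_cocone_triangle₁ (f ≫ g)
  obtain ⟨a, ha₁, _⟩ :=
    complete_distinguished_triangle_morphism₁ _ _ mem' H f (𝟙 Z) (by exact Category.comp_id _)
  exact ⟨X', u, a, ⟨_, _, _, mem', mem⟩, ha₁⟩

lemma ext_right {X Y Y' : C} (s : Y ⟶ Y') (hs : S.trW s) (f₁ f₂ : X ⟶ Y)
    (hf : f₁ ≫ s = f₂ ≫ s) :
    ∃ (X' : C) (t : X' ⟶ X) (_ : S.trW t), t ≫ f₁ = t ≫ f₂ := by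
  rw [S.trW_iff'] at hs
  obtain ⟨Z, g, h, H, mem⟩ := hs
  have hf₂ : (f₁ - f₂) ≫ s = 0 := by rw [Preadditive.sub_comp, hf, sub_self]
  obtain ⟨q, hq⟩ := Triangle.coyoneda_exact₂ _ H _ hf₂
  change X ⟶ Z at q
  obtain ⟨X', r, t, mem'⟩ := distinguished_cocone_triangle₁ q
  refine ⟨X', r, ⟨_, _, _, mem', mem⟩, ?_⟩
  have eq := comp_distTriang_mor_zero₁₂ _ mem'
  change r ≫ q = 0 at eq
  change f₁ - f₂ = q ≫ g at hq
  rw [← sub_eq_zero, ← Preadditive.comp_sub, hq, reassoc_of% eq, Limits.zero_comp]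

lemma mclosure_ore_left :
    ∀ {X' X : C} (s : X' ⟶ X), MClosure S.trW s → ∀ {Y : C} (f : X' ⟶ Y),
    ∃ (Y' : C) (f' : X ⟶ Y') (s' : Y ⟶ Y') (_ : MClosure S.trW s'), f ≫ s' = s ≫ f' := by
  intro X' X s hs
  induction hs with
  | of s hs =>
      intro Y f
      obtain ⟨Y', f', s', hs', fac⟩ := ore_left S s hs f
      exact ⟨Y', f', s', .of _ hs', fac⟩
  | id X =>
      intro Y f
      exact ⟨Y, f, 𝟙 Y, .id Y, by simp⟩
  | comp u v hu hv ihu ihv =>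
      intro Y f
      obtain ⟨Y₁, f₁, s₁, hs₁, fac₁⟩ := ihu f
      obtain ⟨Y₂, f₂, s₂, hs₂, fac₂⟩ := ihv f₁
      exact ⟨Y₂, f₂, s₁ ≫ s₂, .comp _ _ hs₁ hs₂, by
        rw [← Category.assoc, fac₁, Category.assoc, fac₂, ← Category.assoc]⟩

lemma mclosure_ext_left :
    ∀ {X' X : C} (s : X' ⟶ X), MClosure S.trW s → ∀ {Y : C} (f₁ f₂ : X ⟶ Y),
    s ≫ f₁ = s ≫ f₂ →
    ∃ (Y' : C) (t : Y ⟶ Y') (_ : MClosure S.trW t), f₁ ≫ t = f₂ ≫ t := by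
  intro X' X s hs
  induction hs with
  | of s hs =>
      intro Y f₁ f₂ hf
      obtain ⟨Y', t, ht, fac⟩ := ext_left S s hs f₁ f₂ hf
      exact ⟨Y', t, .of _ ht, fac⟩
  | id X =>
      intro Y f₁ f₂ hf
      exact ⟨Y, 𝟙 Y, .id Y, by simpa using hf⟩
  | comp u v hu hv ihu ihv =>
      intro Y f₁ f₂ hf
      obtain ⟨Y₁, t₁, ht₁, fac₁⟩ := ihu (v ≫ f₁) (v ≫ f₂) (by
        simpa only [Category.assoc] using hf)
      obtain ⟨Y₂, t₂, ht₂, fac₂⟩ := ihv (f₁ ≫ t₁) (f₂ ≫ t₁) (by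
        simpa only [Category.assoc] using fac₁)
      exact ⟨Y₂, t₁ ≫ t₂, .comp _ _ ht₁ ht₂, by
        simpa only [Category.assoc] using fac₂⟩

lemma mclosure_ore_right :
    ∀ {Y Y' : C} (s : Y ⟶ Y'), MClosure S.trW s → ∀ {X : C} (f : X ⟶ Y'),
    ∃ (X' : C) (s' : X' ⟶ X) (f' : X' ⟶ Y) (_ : MClosure S.trW s'), s' ≫ f = f' ≫ s := by
  intro Y Y' s hs
  induction hs with
  | of s hs =>
      intro X f
      obtain ⟨X', s', f', hs', fac⟩ := ore_right S s hs f
      exact ⟨X', s', f', .of _ hs', fac⟩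
  | id Y =>
      intro X f
      exact ⟨X, 𝟙 X, f, .id X, by simp⟩
  | comp u v hu hv ihu ihv =>
      intro X f
      obtain ⟨X₂, s₂, f₂, hs₂, fac₂⟩ := ihv f
      obtain ⟨X₁, s₁, f₁, hs₁, fac₁⟩ := ihu f₂
      exact ⟨X₁, s₁ ≫ s₂, f₁, .comp _ _ hs₁ hs₂, by
        rw [Category.assoc, fac₂, ← Category.assoc, fac₁, Category.assoc]⟩

lemma mclosure_ext_right :
    ∀ {Y Y' : C} (s : Y ⟶ Y'), MClosure S.trW s → ∀ {X : C} (f₁ f₂ : X ⟶ Y),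
    f₁ ≫ s = f₂ ≫ s →
    ∃ (X' : C) (t : X' ⟶ X) (_ : MClosure S.trW t), t ≫ f₁ = t ≫ f₂ := by
  intro Y Y' s hs
  induction hs with
  | of s hs =>
      intro X f₁ f₂ hf
      obtain ⟨X', t, ht, fac⟩ := ext_right S s hs f₁ f₂ hf
      exact ⟨X', t, .of _ ht, fac⟩
  | id Y =>
      intro X f₁ f₂ hf
      exact ⟨X, 𝟙 X, .id X, by simpa using hf⟩
  | comp u v hu hv ihu ihv =>
      intro X f₁ f₂ hf
      obtain ⟨X₁, t₁, ht₁, fac₁⟩ := ihv (f₁ ≫ u) (f₂ ≫ u) (by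
        simpa only [Category.assoc] using hf)
      obtain ⟨X₂, t₂, ht₂, fac₂⟩ := ihu (t₁ ≫ f₁) (t₁ ≫ f₂) (by
        simpa only [Category.assoc] using fac₁)
      exact ⟨X₂, t₂ ≫ t₁, .comp _ _ ht₂ ht₁, by
        simpa only [Category.assoc] using fac₂⟩

instance : (MClosure S.trW).HasLeftCalculusOfFractions where
  exists_leftFraction X Y φ := by
    obtain ⟨Y', f', s', hs', fac⟩ := mclosure_ore_left S φ.s φ.hs φ.f
    exact ⟨{ Y' := Y', f := f', s := s', hs := hs' }, fac⟩
  ext X' X Y f₁ f₂ s hs hf := by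
    obtain ⟨Y', t, ht, fac⟩ := mclosure_ext_left S s hs f₁ f₂ hf
    exact ⟨Y', t, ht, fac⟩

instance : (MClosure S.trW).HasRightCalculusOfFractions where
  exists_rightFraction X Y φ := by
    obtain ⟨X', s', f', hs', fac⟩ := mclosure_ore_right S φ.s φ.hs φ.f
    exact ⟨{ X' := X', s := s', hs := hs', f := f' }, fac⟩
  ext X Y Y' f₁ f₂ s hs hf := by
    obtain ⟨X', t, ht, fac⟩ := mclosure_ext_right S s hs f₁ f₂ hf
    exact ⟨X', t, ht, fac⟩

end

end Stmt8Aux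

open Stmt8Aux

theorem stmt8
    {T : Type u₁} [Category.{v₁} T] [Preadditive T] [HasZeroObject T]
    [HasShift T ℤ] [∀ (n : ℤ), (shiftFunctor T n).Additive] [Pretriangulated T]
    {R : Type u₂} [Category.{v₂} R] [Preadditive R] [HasZeroObject R]
    [HasShift R ℤ] [∀ (n : ℤ), (shiftFunctor R n).Additive] [Pretriangulated R]
    (ι : R ⥤ T) [ι.CommShift ℤ] [ι.IsTriangulated] [ι.Full] [ι.Faithful]
    (S : ObjectProperty T) [S.IsTriangulated] (U : ObjectProperty R) [U.IsTriangulated]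
    -- `U = S ∩ R`
    (hU : ∀ X : R, U X ↔ S (ι.obj X))
    -- every morphism from an object of `R` to an object of `S` factors
    -- through an object of `U`
    (hfact : ∀ (X : R) (Y : T), S Y → ∀ f : ι.obj X ⟶ Y,
      ∃ (Z : R) (_ : U Z) (a : X ⟶ Z) (b : ι.obj Z ⟶ Y), ι.map a ≫ b = f) :
    ∀ (J : U.trW.Localization ⥤ S.trW.Localization)
      (_ : Localization.Lifting U.trW.Q U.trW (ι ⋙ S.trW.Q) J),
      J.Full ∧ J.Faithful := by
  intro J hJ
  haveI := hJ
  let e : U.trW.Q ⋙ J ≅ ι ⋙ S.trW.Q := Localization.Lifting.iso U.trW.Q U.trW (ι ⋙ S.trW.Q) J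
  -- `ι` sends `MClosure U.trW` into `MClosure S.trW`
  have hWι : ∀ {X Y : R} (c : X ⟶ Y), MClosure U.trW c → MClosure S.trW (ι.map c) := by
    intro X Y c hc
    induction hc with
    | of c hc =>
        obtain ⟨Z₀, g, h, hT, mem⟩ := hc
        exact .of _ (ObjectProperty.trW.mk S (ι.map_distinguished _ hT) ((hU Z₀).1 mem))
    | id X => rw [ι.map_id]; exact .id _
    | comp f g hf hg ihf ihg => rw [ι.map_comp]; exact .comp _ _ ihf ihg
  -- key Ore-type lemma over `R`
  have lemA : ∀ {Z M : T} (s : Z ⟶ M), MClosure S.trW s → ∀ (X : R) (d : ι.obj X ⟶ M),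
      ∃ (X' : R) (c : X' ⟶ X) (_ : MClosure U.trW c) (d' : ι.obj X' ⟶ Z),
        d' ≫ s = ι.map c ≫ d := by
    intro Z M s hs
    induction hs with
    | of s hs =>
        intro X d
        obtain ⟨N, p, q, hT, mem⟩ := hs
        obtain ⟨Z₀, hZ₀, a, b, hab⟩ := hfact X N mem (d ≫ p)
        obtain ⟨X', c, eX, hT'⟩ := distinguished_cocone_triangle₁ a
        have hca : c ≫ a = 0 := comp_distTriang_mor_zero₁₂ _ hT'
        have h0 : (ι.map c ≫ d) ≫ p = 0 := by
          rw [Category.assoc, ← hab, ← ι.map_comp_assoc, hca, ι.map_zero, Limits.zero_comp]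
        obtain ⟨d', hd'⟩ := Triangle.coyoneda_exact₂ _ hT (ι.map c ≫ d) h0
        exact ⟨X', c, .of _ (ObjectProperty.trW.mk U hT' hZ₀), d', hd'.symm⟩
    | id M =>
        intro X d
        exact ⟨X, 𝟙 X, .id X, d, by simp⟩
    | comp s₁ s₂ h₁ h₂ ih₁ ih₂ =>
        intro X d
        obtain ⟨X₂, c₂, hc₂, d₂, hd₂⟩ := ih₂ X d
        obtain ⟨X₁, c₁, hc₁, d₁, hd₁⟩ := ih₁ X₂ d₂
        exact ⟨X₁, c₁ ≫ c₂, .comp _ _ hc₁ hc₂, d₁, by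
          rw [← Category.assoc, hd₁, Category.assoc, hd₂, ι.map_comp, Category.assoc]⟩
  -- naturality of `e`
  have hθQ : ∀ {X Y : R} (f : X ⟶ Y),
      J.map (U.trW.Q.map f) = e.hom.app X ≫ S.trW.Q.map (ι.map f) ≫ e.inv.app Y := by
    intro X Y f
    have h := e.hom.naturality f
    simp only [Functor.comp_map] at h
    rw [← Category.assoc, ← h, Category.assoc, Iso.hom_inv_id_app, Category.comp_id]
  constructor
  · -- Full
    refine ⟨fun {A B} g => ?_⟩
    obtain ⟨X, rfl⟩ : ∃ X, U.trW.Q.obj X = A :=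
      ⟨A.as.obj, (Localization.Construction.objEquiv U.trW).right_inv A⟩
    obtain ⟨Y, rfl⟩ : ∃ Y, U.trW.Q.obj Y = B :=
      ⟨B.as.obj, (Localization.Construction.objEquiv U.trW).right_inv B⟩
    let g' : J.obj (U.trW.Q.obj X) ⟶ J.obj (U.trW.Q.obj Y) := g
    let g₀ : S.trW.Q.obj (ι.obj X) ⟶ S.trW.Q.obj (ι.obj Y) :=
      e.inv.app X ≫ g' ≫ e.hom.app Y
    obtain ⟨φ, hφ⟩ := Localization.exists_leftFraction S.trW.Q (MClosure S.trW) g₀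
    obtain ⟨X', c, hc, d', hd'⟩ := lemA φ.s φ.hs X φ.f
    have hιc : IsIso (S.trW.Q.map (ι.map c)) :=
      Localization.inverts S.trW.Q (MClosure S.trW) _ (hWι c hc)
    have hΛc : IsIso (U.trW.Q.map c) :=
      Localization.inverts U.trW.Q (MClosure U.trW) c hc
    have key : S.trW.Q.map (ι.map c) ≫ g₀ = S.trW.Q.map (ι.map (ι.preimage d')) := by
      rw [ι.map_preimage, hφ, MorphismProperty.LeftFraction.map_eq,
        ← cancel_mono (Localization.isoOfHom S.trW.Q (MClosure S.trW) φ.s φ.hs).hom,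
        Category.assoc, Category.assoc, Iso.inv_hom_id, Category.comp_id,
        Localization.isoOfHom_hom, ← S.trW.Q.map_comp, ← S.trW.Q.map_comp, hd']
    refine ⟨@inv _ _ _ _ (U.trW.Q.map c) hΛc ≫ U.trW.Q.map (ι.preimage d'), ?_⟩
    rw [← cancel_epi (J.map (U.trW.Q.map c)), ← J.map_comp,
      IsIso.hom_inv_id_assoc, hθQ, hθQ]
    have hg : g₀ ≫ e.inv.app Y = e.inv.app X ≫ g' := by
      simp [g₀]
    calc e.hom.app X' ≫ S.trW.Q.map (ι.map (ι.preimage d')) ≫ e.inv.app Y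
        = e.hom.app X' ≫ (S.trW.Q.map (ι.map c) ≫ g₀) ≫ e.inv.app Y := by rw [key]
      _ = (e.hom.app X' ≫ S.trW.Q.map (ι.map c) ≫ e.inv.app X) ≫ g' := by
          simp only [Category.assoc]
          rw [← hg]
  · -- Faithful
    refine ⟨fun {A B} h₁ h₂ hyp => ?_⟩
    obtain ⟨⟨X⟩⟩ := A
    obtain ⟨⟨Y⟩⟩ := B
    let h₁' : U.trW.Q.obj X ⟶ U.trW.Q.obj Y := h₁
    let h₂' : U.trW.Q.obj X ⟶ U.trW.Q.obj Y := h₂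
    have hyp' : J.map h₁' = J.map h₂' := hyp
    show h₁' = h₂'
    obtain ⟨ψ, hψ⟩ := Localization.exists_rightFraction U.trW.Q (MClosure U.trW) h₁'
    have hs₁ : U.trW.Q.map ψ.s ≫ h₁' = U.trW.Q.map ψ.f := by
      rw [hψ]; exact ψ.map_s_comp_map _ _
    obtain ⟨χ, hχ⟩ := Localization.exists_rightFraction U.trW.Q (MClosure U.trW)
      (U.trW.Q.map ψ.s ≫ h₂')
    have hs₂ : U.trW.Q.map χ.s ≫ U.trW.Q.map ψ.s ≫ h₂' = U.trW.Q.map χ.f := by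
      rw [hχ]; exact χ.map_s_comp_map _ _
    -- get an equality of images under `J`
    have E1 : J.map (U.trW.Q.map (χ.s ≫ ψ.f)) = J.map (U.trW.Q.map χ.f) := by
      rw [U.trW.Q.map_comp, J.map_comp, ← hs₁, J.map_comp, hyp', ← Category.assoc,
        ← J.map_comp, ← U.trW.Q.map_comp]
      rw [← hs₂]
      simp only [Functor.map_comp, Category.assoc]
    -- transfer to `T/S`
    have E2 : S.trW.Q.map (ι.map (χ.s ≫ ψ.f)) = S.trW.Q.map (ι.map χ.f) := by
      have := E1
      rw [hθQ, hθQ] at this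
      rw [← cancel_epi (e.hom.app χ.X'), ← cancel_mono (e.inv.app Y)]
      simpa only [Category.assoc] using this
    obtain ⟨Z, t, ht, heq⟩ :=
      (MorphismProperty.map_eq_iff_precomp S.trW.Q (MClosure S.trW) _ _).1 E2
    obtain ⟨X₃, c, hc, d', hd'⟩ := lemA t ht χ.X' (𝟙 _)
    rw [Category.comp_id] at hd'
    have E3 : c ≫ χ.s ≫ ψ.f = c ≫ χ.f := by
      apply ι.map_injective
      calc ι.map (c ≫ χ.s ≫ ψ.f) = ι.map c ≫ ι.map (χ.s ≫ ψ.f) := by rw [ι.map_comp]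
        _ = d' ≫ t ≫ ι.map (χ.s ≫ ψ.f) := by rw [← hd', Category.assoc]
        _ = d' ≫ t ≫ ι.map χ.f := by rw [heq]
        _ = ι.map c ≫ ι.map χ.f := by rw [← Category.assoc, hd']
        _ = ι.map (c ≫ χ.f) := by rw [ι.map_comp]
    have hΛc : IsIso (U.trW.Q.map c) :=
      Localization.inverts U.trW.Q (MClosure U.trW) c hc
    have hΛχ : IsIso (U.trW.Q.map χ.s) :=
      Localization.inverts U.trW.Q (MClosure U.trW) χ.s χ.hs
    have hΛψ : IsIso (U.trW.Q.map ψ.s) :=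
      Localization.inverts U.trW.Q (MClosure U.trW) ψ.s ψ.hs
    have E4 : U.trW.Q.map χ.s ≫ U.trW.Q.map ψ.f = U.trW.Q.map χ.f := by
      have := congrArg (fun x => U.trW.Q.map x) E3
      simp only [Functor.map_comp] at this
      exact (cancel_epi (U.trW.Q.map c)).1 this
    have E5 : U.trW.Q.map ψ.f = U.trW.Q.map ψ.s ≫ h₂' := by
      apply (cancel_epi (U.trW.Q.map χ.s)).1
      rw [E4, ← hs₂]
    rw [← cancel_epi (U.trW.Q.map ψ.s), hs₁, E5]
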